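/- (Pólya–Vinogradov type estimate) Let p be an odd prime and χ a nontrivial multiplicative character mod p. Then for any integers M and N with 0 ≤ N, the incomplete sum |Σ_{x=M}^{M+N} χ(x)| ≤ √p · log p. -/

import Mathlib

open Finset Real



/-- `exp x ≤ (2+x)/(2-x)` for `0 ≤ x ≤ 1/2`. -/
lemma pv_exp_le {x : ℝ} (hx : 0 ≤ x) (hx2 : x ≤ 1/2) : Real.exp x ≤ (2+x)/(2-x) := by
  have h := Real.exp_bound' hx (by linarith) (n := 4) (by norm_num)
  norm_num [Finset.sum_range_succ, Nat.factorial] at h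
  have h2 : (0:ℝ) < 2 - x := by linarith
  refine h.trans ?_
  rw [le_div_iff₀ h2]
  nlinarith [pow_nonneg hx 3, pow_nonneg hx 4]

/-- `1/k ≤ log(2k+1) - log(2k-1)` for `k ≥ 2`. -/
lemma pv_one_div_le_log {k : ℕ} (hk : 2 ≤ k) :
    (1:ℝ)/k ≤ Real.log (2*k+1) - Real.log (2*k-1) := by
  have hk1 : (2:ℝ) ≤ k := by exact_mod_cast hk
  have h1 : (0:ℝ) < 2*k-1 := by linarith
  have h2 : (0:ℝ) < 2*k+1 := by linarith
  rw [← Real.log_div h2.ne' h1.ne', Real.le_log_iff_exp_le (by positivity)]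
  have hkpos : (0:ℝ) < k := by linarith
  have := pv_exp_le (x := 1/k) (by positivity) (by rw [div_le_div_iff₀ hkpos] <;> linarith)
  refine this.trans (le_of_eq ?_)
  field_simp

/-- Harmonic sum bound: `H_m ≤ log (2m+1)`. -/
lemma pv_harmonic_le (m : ℕ) : ∑ k ∈ Finset.Icc 1 m, (1:ℝ)/k ≤ Real.log (2*m+1) := by
  have h3 : (1:ℝ) ≤ Real.log 3 := by
    rw [Real.le_log_iff_exp_le (by norm_num)]
    calc Real.exp 1 ≤ 2.7182818286 := Real.exp_one_lt_d9.le
    _ ≤ 3 := by norm_num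
  induction m with
  | zero => simp
  | succ n ih =>
    rcases Nat.eq_zero_or_pos n with rfl | hn
    · simpa using h3.trans (le_of_eq (by norm_num))
    · have step : (1:ℝ)/(n+1) ≤ Real.log (2*(n+1)+1) - Real.log (2*n+1) := by
        have h := pv_one_div_le_log (k := n+1) (by omega)
        have e1 : (2*((n:ℝ)+1)-1) = 2*n+1 := by ring
        push_cast at h ⊢
        rw [e1] at h
        convert h using 3
      rw [Finset.sum_Icc_succ_top (by omega : 1 ≤ n+1)]
      push_cast at step ih ⊢
      linarith


/-- Concavity-type lower bound for sine at rational points. -/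
lemma pv_sin_lower {p a : ℕ} (h1 : 1 ≤ a) (h2 : a ≤ p - 1) (hp : 1 ≤ p) :
    2 * ((min a (p-a) : ℕ) : ℝ) / p ≤ Real.sin (π * a / p) := by
  have hap : a < p := by omega
  have hppos : (0:ℝ) < p := by exact_mod_cast (by omega : 0 < p)
  rcases le_or_gt a (p - a) with hle | hlt
  · have hmin : min a (p-a) = a := min_eq_left hle
    have h2a : 2*a ≤ p := by omega
    have hx0 : 0 ≤ π * a / p := by positivity
    have hx2 : π * a / p ≤ π / 2 := by
      rw [div_le_div_iff₀ hppos (by norm_num : (0:ℝ) < 2)]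
      have : (2*a : ℝ) ≤ p := by exact_mod_cast h2a
      nlinarith [Real.pi_pos]
    have := Real.mul_le_sin hx0 hx2
    rw [hmin]
    calc 2 * (a:ℝ) / p = 2/π * (π * a / p) := by
          field_simp
    _ ≤ Real.sin (π * a / p) := this
  · have hmin : min a (p-a) = p - a := min_eq_right hlt.le
    have hcast : ((p - a : ℕ) : ℝ) = (p:ℝ) - a := by
      push_cast [Nat.cast_sub hap.le]
      ring
    have h2a : 2*(p-a) ≤ p := by omega
    have hale : (a:ℝ) ≤ p := by exact_mod_cast hap.le
    have hx0 : 0 ≤ π * ((p:ℝ)-a) / p := by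
      have := Real.pi_pos
      have h0 : (0:ℝ) ≤ (p:ℝ) - a := by linarith
      positivity
    have hx2 : π * ((p:ℝ)-a) / p ≤ π / 2 := by
      rw [div_le_div_iff₀ hppos (by norm_num : (0:ℝ) < 2)]
      have h' : 2*((p:ℝ)-a) ≤ p := by
        have : ((2*(p-a):ℕ):ℝ) ≤ p := by exact_mod_cast h2a
        push_cast [Nat.cast_sub hap.le] at this
        linarith
      nlinarith [Real.pi_pos]
    have hsin := Real.mul_le_sin hx0 hx2
    have hsymm : Real.sin (π * ((p:ℝ)-a) / p) = Real.sin (π * a / p) := by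
      rw [show π * ((p:ℝ)-a) / p = π - π * a / p by field_simp, Real.sin_pi_sub]
    rw [hmin, hcast]
    calc 2 * ((p:ℝ)-a) / p = 2/π * (π * ((p:ℝ)-a) / p) := by field_simp
    _ ≤ Real.sin (π * ((p:ℝ)-a) / p) := hsin
    _ = Real.sin (π * a / p) := hsymm

/-- Folding the sum of `1/min(a, p-a)` into twice a harmonic sum. -/
lemma pv_sum_min {m : ℕ} :
    ∑ a ∈ Finset.Icc 1 (2*m), (1:ℝ)/((min a (2*m+1-a) : ℕ) : ℝ)
      = 2 * ∑ k ∈ Finset.Icc 1 m, (1:ℝ)/k := by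
  have hsplit : Finset.Icc 1 (2*m) = Finset.Icc 1 m ∪ Finset.Ioc m (2*m) := by
    ext a
    simp only [Finset.mem_Icc, Finset.mem_union, Finset.mem_Ioc]
    omega
  have hdisj : Disjoint (Finset.Icc 1 m) (Finset.Ioc m (2*m)) := by
    rw [Finset.disjoint_left]
    intro a ha hb
    simp only [Finset.mem_Icc, Finset.mem_Ioc] at ha hb
    omega
  rw [hsplit, Finset.sum_union hdisj]
  have e1 : ∑ a ∈ Finset.Icc 1 m, (1:ℝ)/((min a (2*m+1-a) : ℕ) : ℝ)
      = ∑ k ∈ Finset.Icc 1 m, (1:ℝ)/k := by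
    refine Finset.sum_congr rfl fun a ha => ?_
    simp only [Finset.mem_Icc] at ha
    rw [show min a (2*m+1-a) = a by omega]
  have e2 : ∑ a ∈ Finset.Ioc m (2*m), (1:ℝ)/((min a (2*m+1-a) : ℕ) : ℝ)
      = ∑ k ∈ Finset.Icc 1 m, (1:ℝ)/k := by
    refine Finset.sum_nbij' (i := fun a => 2*m+1-a) (j := fun k => 2*m+1-k) ?_ ?_ ?_ ?_ ?_
    · intro a ha; simp only [Finset.mem_Ioc] at ha; simp only [Finset.mem_Icc]; omega
    · intro k hk; simp only [Finset.mem_Icc] at hk; simp only [Finset.mem_Ioc]; omega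
    · intro a ha; simp only [Finset.mem_Ioc] at ha; omega
    · intro k hk; simp only [Finset.mem_Icc] at hk; omega
    · intro a ha; simp only [Finset.mem_Ioc] at ha
      rw [show min a (2*m+1-a) = 2*m+1-a by omega]
  rw [e1, e2]
  ring


/-- Conjugate of a value of the standard additive character. -/
lemma pv_conj_stdAddChar {p : ℕ} [NeZero p] (t : ZMod p) :
    (starRingEnd ℂ) (ZMod.stdAddChar t) = ZMod.stdAddChar (-t) := by
  have habs : ‖ZMod.stdAddChar t‖ = 1 := by
    rw [ZMod.stdAddChar_apply]; exact Circle.norm_coe _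
  have hne : (ZMod.stdAddChar t : ℂ) ≠ 0 := by
    intro h; rw [h] at habs; simp at habs
  have h1 : ZMod.stdAddChar (-t) * ZMod.stdAddChar t = 1 := by
    rw [← AddChar.map_add_eq_mul, neg_add_cancel, AddChar.map_zero_eq_one]
  have h2 : (starRingEnd ℂ) (ZMod.stdAddChar t) * ZMod.stdAddChar t = 1 := by
    rw [mul_comm, Complex.mul_conj, ← Complex.sq_norm, habs]
    norm_num
  exact mul_right_cancel₀ hne (h2.trans h1.symm)

/-- The norm of the Gauss sum of a nontrivial character mod a prime `p` is `√p`. -/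
lemma pv_gauss_norm {p : ℕ} [Fact p.Prime] (χ : DirichletCharacter ℂ p) (hχ : χ ≠ 1) :
    ‖gaussSum χ (ZMod.stdAddChar (N := p))‖ = Real.sqrt p := by
  haveI : NeZero p := ⟨(Fact.out : p.Prime).ne_zero⟩
  have hψ := ZMod.isPrimitive_stdAddChar p
  have key := gaussSum_mul_gaussSum_eq_card hχ hψ
  have hconj : (starRingEnd ℂ) (gaussSum χ (ZMod.stdAddChar (N := p)))
      = gaussSum χ⁻¹ (ZMod.stdAddChar (N := p))⁻¹ := by
    rw [gaussSum, gaussSum, map_sum]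
    refine Finset.sum_congr rfl fun t _ => ?_
    rw [map_mul]
    congr 1
    · exact MulChar.star_apply' χ t
    · rw [AddChar.inv_apply]
      exact pv_conj_stdAddChar t
  rw [← hconj] at key
  have hcard : (Fintype.card (ZMod p) : ℂ) = (p : ℂ) := by
    rw [ZMod.card]
  rw [hcard, Complex.mul_conj] at key
  have : (Complex.normSq (gaussSum χ (ZMod.stdAddChar (N := p))) : ℝ) = p := by
    exact_mod_cast key
  rw [Complex.norm_def, this]



/-- Bound on the geometric sum of additive character values. -/
lemma pv_geom_bound {p : ℕ} [Fact p.Prime] {t : ZMod p} (ht : t ≠ 0) (N : ℕ) :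
    ‖∑ x ∈ Finset.range (N+1), (ZMod.stdAddChar t)^x‖
      ≤ (p:ℝ) / (2 * ((min t.val (p - t.val) : ℕ) : ℝ)) := by
  haveI : NeZero p := ⟨(Fact.out : p.Prime).ne_zero⟩
  have hp2 : 2 ≤ p := (Fact.out : p.Prime).two_le
  set a := t.val with ha
  have ha1 : 1 ≤ a := by
    rcases Nat.eq_zero_or_pos a with h | h
    · exact absurd (by rwa [← ZMod.val_eq_zero]) ht
    · exact h
  have hap : a < p := ZMod.val_lt t
  have ha2 : a ≤ p - 1 := by omega
  have hppos : (0:ℝ) < p := by exact_mod_cast (by omega : 0 < p)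
  have hapos : (0:ℝ) < a := by exact_mod_cast ha1
  set z : ℂ := ZMod.stdAddChar t with hzdef
  have habs : ‖z‖ = 1 := by
    rw [hzdef, ZMod.stdAddChar_apply]; exact Circle.norm_coe _
  have hz : z = Complex.exp (((2*π*a/p : ℝ) : ℂ) * Complex.I) := by
    have ht' : ((a : ℤ) : ZMod p) = t := by
      push_cast
      exact ZMod.natCast_rightInverse t
    rw [hzdef, ← ht', ZMod.stdAddChar_coe]
    congr 1
    push_cast
    ring
  -- sin bounds
  have hx0 : 0 < π * a / p := by positivity
  have hxpi : π * a / p < π := by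
    rw [div_lt_iff₀ hppos]
    have : (a:ℝ) < p := by exact_mod_cast hap
    nlinarith [Real.pi_pos]
  have hsinpos : 0 < Real.sin (π * a / p) :=
    Real.sin_pos_of_pos_of_lt_pi hx0 hxpi
  -- |z - 1| = 2 sin(πa/p)
  have hden : ‖z - 1‖ = 2 * Real.sin (π * a / p) := by
    have hform : z - 1 = Complex.ofReal (Real.cos (2*π*a/p) - 1)
        + Complex.ofReal (Real.sin (2*π*a/p)) * Complex.I := by
      rw [hz, Complex.exp_mul_I]
      push_cast [Complex.ofReal_cos, Complex.ofReal_sin]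
      ring
    rw [hform, Complex.norm_def, Complex.normSq_add_mul_I]
    have hid : (Real.cos (2*π*a/p) - 1)^2 + (Real.sin (2*π*a/p))^2
        = (2 * Real.sin (π * a / p))^2 := by
      have e : 2*π*a/p = 2*(π*a/p) := by ring
      rw [e]
      have h1 := Real.sin_sq_add_cos_sq (2*(π*a/p))
      have h2 := Real.cos_two_mul' (π*a/p)
      have h3 := Real.sin_sq_add_cos_sq (π*a/p)
      nlinarith [h1, h2, h3]
    rw [hid, Real.sqrt_sq (by positivity)]
  have hz1 : z ≠ 1 := by
    intro h
    rw [h, sub_self, norm_zero] at hden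
    nlinarith
  rw [geom_sum_eq hz1, norm_div, hden]
  have hnum : ‖z^(N+1) - 1‖ ≤ 2 := by
    calc ‖z^(N+1) - 1‖ ≤ ‖z^(N+1)‖ + ‖(1:ℂ)‖ := norm_sub_le _ _
    _ = 2 := by
        rw [norm_pow, habs, one_pow, norm_one]
        norm_num
  have hsinlow := pv_sin_lower ha1 ha2 (by omega)
  have hminpos : (0:ℝ) < ((min a (p-a) : ℕ) : ℝ) := by
    have : 1 ≤ min a (p-a) := by omega
    exact_mod_cast this
  calc ‖z^(N+1) - 1‖ / (2 * Real.sin (π * a / p))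
      ≤ 2 / (2 * Real.sin (π * a / p)) := by
        gcongr
  _ ≤ (p:ℝ) / (2 * ((min a (p-a) : ℕ) : ℝ)) := by
        rw [div_le_div_iff₀ (by positivity) (by positivity)]
        rw [div_le_iff₀ hppos] at hsinlow
        nlinarith [hsinlow, hminpos, hppos, hsinpos]



/-- Pólya–Vinogradov type estimate: for a nontrivial multiplicative character χ mod an
odd prime p, any incomplete sum of χ over consecutive integers is at most √p · log p. -/
theorem polya_vinogradov (p : ℕ) [Fact p.Prime] (hp : p ≠ 2)
    (χ : DirichletCharacter ℂ p) (hχ : χ ≠ 1) (M : ℤ) (N : ℕ) :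
    ‖∑ x ∈ Finset.range (N + 1), χ ((M + x : ℤ) : ZMod p)‖ ≤
      Real.sqrt p * Real.log p := by
  have hp_prime : p.Prime := Fact.out
  haveI : NeZero p := ⟨hp_prime.ne_zero⟩
  haveI : Fact (1 < p) := ⟨hp_prime.one_lt⟩
  have hp2 : 2 ≤ p := hp_prime.two_le
  obtain ⟨m, hpm⟩ : ∃ m, p = 2*m+1 := by
    obtain ⟨k, hk⟩ := hp_prime.odd_of_ne_two hp
    exact ⟨k, hk⟩
  set ψ := ZMod.stdAddChar (N := p) with hψdef
  have hχ' : χ⁻¹ ≠ 1 := fun h => hχ (inv_eq_one.mp h)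
  have hprim : (χ⁻¹).IsPrimitive := by
    have hdvd := DirichletCharacter.conductor_dvd_level (χ⁻¹)
    rcases (Nat.Prime.eq_one_or_self_of_dvd hp_prime _ hdvd) with h | h
    · exact absurd ((DirichletCharacter.eq_one_iff_conductor_eq_one
        (n := p)).mpr h) hχ'
    · exact h
  set τ := gaussSum χ⁻¹ ψ with hτdef
  have hτabs : ‖τ‖ = Real.sqrt p := pv_gauss_norm χ⁻¹ hχ'
  have hτpos : 0 < ‖τ‖ := by
    rw [hτabs]
    exact Real.sqrt_pos.mpr (by exact_mod_cast (by omega : 0 < p))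
  -- Fourier expansion of χ
  have hid : ∀ a : ZMod p, χ a * τ = ∑ t : ZMod p, χ⁻¹ t * ψ (a * t) := by
    intro a
    have h := gaussSum_mulShift_of_isPrimitive ψ hprim a
    rw [inv_inv] at h
    rw [← h]
    simp only [gaussSum, AddChar.mulShift_apply]
  set S := ∑ x ∈ Finset.range (N + 1), χ ((M + x : ℤ) : ZMod p) with hSdef
  have hτS : τ * S = ∑ t : ZMod p,
      (χ⁻¹ t * ψ (((M : ZMod p)) * t)) * ∑ x ∈ Finset.range (N+1), (ψ t)^x := by
    calc τ * S = ∑ x ∈ Finset.range (N+1), χ ((M + x : ℤ) : ZMod p) * τ := by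
          rw [hSdef, Finset.mul_sum]
          exact Finset.sum_congr rfl fun x _ => mul_comm _ _
    _ = ∑ x ∈ Finset.range (N+1), ∑ t : ZMod p,
          χ⁻¹ t * ψ ((((M + x : ℤ) : ZMod p)) * t) := by
          exact Finset.sum_congr rfl fun x _ => hid _
    _ = ∑ t : ZMod p, ∑ x ∈ Finset.range (N+1),
          χ⁻¹ t * ψ ((((M + x : ℤ) : ZMod p)) * t) := Finset.sum_comm
    _ = _ := by
          refine Finset.sum_congr rfl fun t _ => ?_
          rw [Finset.mul_sum]
          refine Finset.sum_congr rfl fun x _ => ?_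
          have hsplit : (((M + x : ℤ) : ZMod p)) * t = (M : ZMod p) * t + x • t := by
            push_cast
            rw [nsmul_eq_mul]
            ring
          rw [hsplit, AddChar.map_add_eq_mul, AddChar.map_nsmul_eq_pow]
          ring
  -- bound each term
  have hterm : ∀ t : ZMod p, ‖(χ⁻¹ t * ψ (((M : ZMod p)) * t))
      * ∑ x ∈ Finset.range (N+1), (ψ t)^x‖
      ≤ (if t = 0 then 0 else (p:ℝ)/(2*((min t.val (p - t.val) : ℕ) : ℝ))) := by
    intro t
    by_cases ht : t = 0
    · simp only [ht, if_true]
      have : χ⁻¹ (0 : ZMod p) = 0 := by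
        exact MulChar.map_nonunit _ (by exact not_isUnit_zero)
      rw [this]
      simp
    · simp only [ht, if_false]
      rw [norm_mul, norm_mul]
      have h1 : ‖χ⁻¹ t‖ ≤ 1 := by
        exact DirichletCharacter.norm_le_one _ _
      have h2 : ‖ψ (((M : ZMod p)) * t)‖ = 1 := by
        rw [hψdef, ZMod.stdAddChar_apply]; exact Circle.norm_coe _
      have h3 := pv_geom_bound ht N
      have h3nonneg : (0:ℝ) ≤ (p:ℝ)/(2*((min t.val (p - t.val) : ℕ) : ℝ)) := by
        positivity
      calc ‖χ⁻¹ t‖ * ‖ψ (((M : ZMod p)) * t)‖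
            * ‖∑ x ∈ Finset.range (N+1), (ψ t)^x‖
          = ‖χ⁻¹ t‖ * ‖∑ x ∈ Finset.range (N+1), (ψ t)^x‖ := by
            rw [h2, mul_one]
      _ ≤ 1 * ((p:ℝ)/(2*((min t.val (p - t.val) : ℕ) : ℝ))) :=
            mul_le_mul h1 h3 (norm_nonneg _) zero_le_one
      _ = (p:ℝ)/(2*((min t.val (p - t.val) : ℕ) : ℝ)) := by rw [one_mul]
  -- sum the bounds
  have hsum : ‖τ * S‖ ≤
      ∑ t : ZMod p, (if t = 0 then 0 else (p:ℝ)/(2*((min t.val (p - t.val) : ℕ) : ℝ))) := by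
    rw [hτS]
    exact (norm_sum_le _ _).trans (Finset.sum_le_sum fun t _ => hterm t)
  -- reindex over naturals
  have hreindex : ∑ t : ZMod p, (if t = 0 then 0 else (p:ℝ)/(2*((min t.val (p - t.val) : ℕ) : ℝ)))
      = ∑ a ∈ Finset.range p, (if a = 0 then 0 else (p:ℝ)/(2*((min a (p - a) : ℕ) : ℝ))) := by
    refine Finset.sum_nbij' (i := fun t => t.val) (j := fun a => (a : ZMod p)) ?_ ?_ ?_ ?_ ?_
    · intro t _; exact Finset.mem_range.mpr (ZMod.val_lt t)
    · intro a _; exact Finset.mem_univ _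
    · intro t _; exact ZMod.natCast_rightInverse t
    · intro a ha; exact ZMod.val_cast_of_lt (Finset.mem_range.mp ha)
    · intro t _
      congr 1
      simp [ZMod.val_eq_zero]
  -- evaluate the natural sum
  have hIco : Finset.Ico 1 p = Finset.Icc 1 (2*m) := by
    rw [hpm]
    rfl
  have hnatsum : ∑ a ∈ Finset.range p, (if a = 0 then 0 else (p:ℝ)/(2*((min a (p - a) : ℕ) : ℝ)))
      ≤ (p:ℝ) * Real.log p := by
    rw [Finset.range_eq_Ico, Finset.sum_eq_sum_Ico_succ_bot (by omega : 0 < p)]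
    rw [if_pos rfl, zero_add]
    have : ∀ a ∈ Finset.Ico 1 p,
        (if a = 0 then (0:ℝ) else (p:ℝ)/(2*((min a (p - a) : ℕ) : ℝ)))
        = ((p:ℝ)/2) * ((1:ℝ)/((min a (2*m+1-a) : ℕ) : ℝ)) := by
      intro a ha
      rw [Finset.mem_Ico] at ha
      rw [if_neg (by omega), hpm]
      field_simp
    rw [Finset.sum_congr rfl this, hIco, ← Finset.mul_sum, pv_sum_min]
    have hlog := pv_harmonic_le m
    have hppos : (0:ℝ) < p := by exact_mod_cast (by omega : 0 < p)
    have hcast : ((2*m+1 : ℕ) : ℝ) = 2*(m:ℝ)+1 := by push_cast; ring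
    calc (p:ℝ)/2 * (2 * ∑ k ∈ Finset.Icc 1 m, (1:ℝ)/k)
        = (p:ℝ) * ∑ k ∈ Finset.Icc 1 m, (1:ℝ)/k := by ring
    _ ≤ (p:ℝ) * Real.log (2*m+1) := by
        apply mul_le_mul_of_nonneg_left hlog hppos.le
    _ = (p:ℝ) * Real.log p := by
        rw [hpm]
        push_cast
        ring_nf
  -- final assembly
  have hfinal : Real.sqrt p * ‖S‖ ≤ (p:ℝ) * Real.log p := by
    rw [← hτabs, ← norm_mul]
    exact hsum.trans (le_of_eq hreindex) |>.trans hnatsum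
  have hsqrtpos : (0:ℝ) < Real.sqrt p := hτabs ▸ hτpos
  have hps : (p:ℝ) = Real.sqrt p * Real.sqrt p :=
    (Real.mul_self_sqrt (by positivity)).symm
  have hdiv : ‖S‖ ≤ (p:ℝ) * Real.log p / Real.sqrt p := by
    rw [le_div_iff₀ hsqrtpos]
    linarith [hfinal]
  refine hdiv.trans (le_of_eq ?_)
  rw [div_eq_iff hsqrtpos.ne']
  linear_combination Real.log (p:ℝ) * hps
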